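/- For the affine Weyl group of type A_{n-1}^{(1)}, if a, b ∈ K_0 are such that a and b each commute with φ_0 in the sense of membership in L_0, and λ, μ ∈ P satisfy φ_0(a e^λ) = a and φ_0(a e^μ) = a, then φ_0(a e^{λ+μ}) = a. -/

import Mathlib

/-!
STATEMENT 18: (Lemma L:L0add, for the affine Weyl group of type
`A_{n-1}^{(1)}` — stated here for the affine K-NilHecke ring of any affine
Weyl group `Wa` with the level-zero action on `P`.)  If `a ∈ 𝕂₀` and
`λ, μ ∈ P` satisfy `φ₀(a e^λ) = a` and `φ₀(a e^μ) = a` (the commutation with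
`φ₀` defining membership in `𝕃₀`, checked at `λ` and at `μ`), then
`φ₀(a e^{λ+μ}) = a`.

Setup.  `F = Q(T)`, `R = R(T) = ℤ[P] ⊆ F` with exponentials `e : P → R`;
`aug : R(T) → ℤ` is the augmentation `e^λ ↦ 1`; the `T_w` are the operators
of the affine K-NilHecke ring (products of the
`T_i = (1-e^{α_i})⁻¹(r_i - 1)` along reduced words); `𝕂₀ = ⊕_w ℤ T_w`;
`φ₀` applies `aug` coefficientwise in the `T_w`-basis (`hφ0`), which makes
sense by `𝕂 = ⊕_w R(T) T_w`: each `T_w e^λ` is again a finite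
`R(T)`-combination of the `T_v` (`hclose`), with uniquely determined
coefficients (`hindep`).
-/
open scoped Classical

noncomputable section

/-- Left multiplication by `q : F` as an additive endomorphism of `F`. -/
def mulOp {F : Type*} [Field F] (q : F) : Module.End ℤ F :=
  (AddMonoidHom.mulLeft q).toIntLinearMap

/-- The action of a group element `w : W` on `F` as an additive endomorphism. -/
def grpOp {W F : Type*} [Field F] [Group W] [MulSemiringAction W F] (w : W) :
    Module.End ℤ F :=
  (DistribMulAction.toAddMonoidHom F w).toIntLinearMap

/-- The Demazure element `T = (1 - a)⁻¹ (w - 1)` (with `a = e^{α_i}`,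
`w = r_i`) as an operator on `F`. -/
def TOp {W F : Type*} [Field F] [Group W] [MulSemiringAction W F]
    (a : F) (w : W) : Module.End ℤ F :=
  mulOp (1 - a)⁻¹ * (grpOp w - 1)

/-- `T_ω = T_{i_1} ⋯ T_{i_N}` for a word `ω = (i_1, …, i_N)`. -/
def Tword {B W F : Type*} [Field F] [Group W] [MulSemiringAction W F]
    {M : CoxeterMatrix B} (cs : CoxeterSystem M W) (a : B → F) (ω : List B) :
    Module.End ℤ F :=
  (ω.map (fun i => TOp (a i) (cs.simple i))).prod

/-- The affine 0-Hecke algebra `𝕂₀ = ⊕_w ℤ T_w`. -/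
def K0set {W F : Type*} [Field F]
    (Tw : W → Module.End ℤ F) : Set (Module.End ℤ F) :=
  {x | ∃ d : W →₀ ℤ, x = ∑ w ∈ d.support, d w • Tw w}

theorem phi0_exponential_additivity
    {B Wa P F : Type*} [Field F] [Group Wa] [MulSemiringAction Wa F]
    [AddCommGroup P]
    {M : CoxeterMatrix B} (cs : CoxeterSystem M Wa) (a : B → F)
    (Tw : Wa → Module.End ℤ F)
    (hTw : ∀ ω : List B, cs.IsReduced ω → Tw (cs.wordProd ω) = Tword cs a ω)
    (R : Subring F)
    (e : P → R) (he : ∀ lam mu : P, e (lam + mu) = e lam * e mu)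
    (aug : R →+* ℤ) (haug : ∀ lam : P, aug (e lam) = 1)
    (hclose : ∀ (w : Wa) (q : R), ∃ d : Wa →₀ R,
      Tw w * mulOp (q : F) = ∑ v ∈ d.support, mulOp ((d v : R) : F) * Tw v)
    (hindep : ∀ d : Wa →₀ F,
      ∑ w ∈ d.support, mulOp (d w) * Tw w = 0 → d = 0)
    (φ0 : Module.End ℤ F → Module.End ℤ F)
    (hφ0 : ∀ d : Wa →₀ R,
      φ0 (∑ w ∈ d.support, mulOp ((d w : R) : F) * Tw w)
        = ∑ w ∈ d.support, (aug (d w)) • Tw w)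
    (A : Module.End ℤ F) (hA : A ∈ K0set Tw)
    (lam mu : P)
    (hlam : φ0 (A * mulOp ((e lam : R) : F)) = A)
    (hmu : φ0 (A * mulOp ((e mu : R) : F)) = A) :
    φ0 (A * mulOp ((e (lam + mu) : R) : F)) = A := by
  classical
  -- basic facts about `mulOp`
  have mulOp_apply : ∀ (q x : F), mulOp q x = q * x := fun q x => rfl
  have mulOp_zero : mulOp (0 : F) = 0 := by
    ext z; simp [mulOp_apply]
  have mulOp_add : ∀ x y : F, mulOp (x + y) = mulOp x + mulOp y := by
    intro x y; ext z; simp [mulOp_apply, add_mul]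
  have mulOp_mul : ∀ x y : F, mulOp (x * y) = mulOp x * mulOp y := by
    intro x y; ext z; simp [mulOp_apply, mul_assoc]
  have cast3 : ∀ m : ℤ, (((m : R) : F)) = (m : F) := by
    intro m; push_cast; ring
  have mulOp_int : ∀ (m : ℤ) (T : Module.End ℤ F),
      mulOp (((m : R) : F)) * T = m • T := by
    intro m T; ext z
    simp [Module.End.mul_apply, mulOp_apply, cast3, zsmul_eq_mul]
  -- the linear-combination map `S`
  let S : (Wa →₀ R) →+ Module.End ℤ F :=
    AddMonoidHom.mk' (fun d => d.sum fun w q => mulOp ((q : F)) * Tw w)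
      (fun d1 d2 => Finsupp.sum_add_index'
        (fun w => by simp [mulOp_zero])
        (fun w x y => by push_cast; rw [mulOp_add, add_mul]))
  have hS : ∀ d : Wa →₀ R,
      S d = ∑ w ∈ d.support, mulOp ((d w : R) : F) * Tw w := fun d => rfl
  -- φ0 on S
  have hφS : ∀ d : Wa →₀ R,
      φ0 (S d) = d.sum fun w q => (aug q) • Tw w := by
    intro d; rw [hS]; exact hφ0 d
  -- `S` is injective
  have hSinj : ∀ d : Wa →₀ R, S d = 0 → d = 0 := by
    intro d hd
    set dF : Wa →₀ F := d.mapRange (fun q : R => (q : F)) (by simp) with hdF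
    have h1 : dF.sum (fun w q => mulOp q * Tw w) = S d :=
      Finsupp.sum_mapRange_index (f := fun q : R => (q : F)) (hf := by simp)
        (g := d) (h := fun w q => mulOp q * Tw w)
        (fun w => by simp [mulOp_zero])
    have h2 : ∑ w ∈ dF.support, mulOp (dF w) * Tw w = 0 := by
      rw [show (∑ w ∈ dF.support, mulOp (dF w) * Tw w)
          = dF.sum fun w q => mulOp q * Tw w from rfl, h1, hd]
    have h0 := hindep dF h2
    ext w
    have h3 := DFunLike.congr_fun h0 w
    simp [hdF, Finsupp.mapRange_apply] at h3
    exact_mod_cast h3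
  have hSinj2 : ∀ d1 d2 : Wa →₀ R, S d1 = S d2 → d1 = d2 := by
    intro d1 d2 h
    have := hSinj (d1 - d2) (by rw [map_sub, h, sub_self])
    exact sub_eq_zero.mp this
  -- scaling of finsupps
  let smulF : R → (Wa →₀ R) → (Wa →₀ R) :=
    fun x c => c.mapRange (fun y => x * y) (mul_zero x)
  have smulF_apply : ∀ (x : R) (c : Wa →₀ R) (v : Wa),
      smulF x c v = x * c v := fun x c v => rfl
  have smulF_zero : ∀ c : Wa →₀ R, smulF 0 c = 0 := by
    intro c; ext v; simp [smulF_apply]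
  have hS_smul : ∀ (x : R) (c : Wa →₀ R),
      S (smulF x c) = mulOp (x : F) * S c := by
    intro x c
    have h1 : S (smulF x c) = c.sum fun v q => mulOp ((x * q : R) : F) * Tw v :=
      Finsupp.sum_mapRange_index (f := fun y => x * y) (hf := mul_zero x)
        (g := c) (h := fun v q => mulOp ((q : R) : F) * Tw v)
        (fun v => by simp [mulOp_zero])
    rw [h1]
    show _ = mulOp (x : F) * c.sum fun v q => mulOp (q : F) * Tw v
    rw [Finsupp.sum, Finsupp.sum, Finset.mul_sum]
    refine Finset.sum_congr rfl fun v _ => ?_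
    push_cast
    rw [mulOp_mul, mul_assoc]
  -- the coefficientwise augmentation
  let augF : (Wa →₀ R) → (Wa →₀ R) :=
    fun d => d.mapRange (fun q => ((aug q : ℤ) : R)) (by simp)
  have augF_apply : ∀ (d : Wa →₀ R) (w : Wa),
      augF d w = ((aug (d w) : ℤ) : R) := fun d w => rfl
  have haugF_add : ∀ d1 d2 : Wa →₀ R, augF (d1 + d2) = augF d1 + augF d2 := by
    intro d1 d2; ext w; simp [augF_apply, map_add]
  have hΦ : ∀ d : Wa →₀ R,
      (d.sum fun w q => (aug q) • Tw w) = S (augF d) := by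
    intro d
    have h1 : S (augF d)
        = d.sum fun w q => mulOp (((aug q : ℤ) : R) : F) * Tw w :=
      Finsupp.sum_mapRange_index (f := fun q => ((aug q : ℤ) : R)) (hf := by simp)
        (g := d) (h := fun w q => mulOp ((q : R) : F) * Tw w)
        (fun w => by simp [mulOp_zero])
    rw [h1]
    exact Finsupp.sum_congr fun w _ => (mulOp_int (aug (d w)) (Tw w)).symm
  have haugF_smul : ∀ (x : R) (c : Wa →₀ R),
      augF (smulF x c) = smulF ((aug x : ℤ) : R) (augF c) := by
    intro x c; ext v
    simp only [augF_apply, smulF_apply, map_mul]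
    push_cast; ring
  -- choice of re-expansion coefficients
  choose cc hcc using hclose
  have hcc' : ∀ (w : Wa) (q : R), Tw w * mulOp (q : F) = S (cc w q) := by
    intro w q; rw [hS]; exact hcc w q
  -- the re-expansion of a combination multiplied by `mulOp q`
  let mulExp : R → (Wa →₀ R) → (Wa →₀ R) :=
    fun q d => d.sum fun w x => smulF x (cc w q)
  have hmulExp : ∀ (q : R) (d : Wa →₀ R),
      S d * mulOp (q : F) = S (mulExp q d) := by
    intro q d
    rw [hS, Finset.sum_mul]
    have : (mulExp q d) = ∑ w ∈ d.support, smulF (d w) (cc w q) := rfl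
    rw [this, map_sum]
    refine Finset.sum_congr rfl fun w _ => ?_
    rw [mul_assoc, hcc', hS_smul]
  -- key: the augmentation of a re-expansion only depends on the augmentation
  have haugF_mulExp : ∀ (q : R) (d : Wa →₀ R),
      augF (mulExp q d) = augF (mulExp q (augF d)) := by
    intro q d
    have hL : mulExp q d = ∑ w ∈ d.support, smulF (d w) (cc w q) := rfl
    have hR : mulExp q (augF d)
        = d.sum fun w x => smulF ((aug x : ℤ) : R) (cc w q) :=
      Finsupp.sum_mapRange_index (f := fun q => ((aug q : ℤ) : R)) (hf := by simp)
        (g := d) (h := fun w x => smulF x (cc w q))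
        (fun w => by simp [smulF_zero])
    -- augF is additive over finite sums
    have haugF_sum : ∀ (s : Finset Wa) (g : Wa → (Wa →₀ R)),
        augF (∑ w ∈ s, g w) = ∑ w ∈ s, augF (g w) := by
      intro s g
      induction s using Finset.induction_on with
      | empty => ext v; simp [augF_apply]
      | insert _ _ h ih =>
        rw [Finset.sum_insert h, Finset.sum_insert h, haugF_add, ih]
    rw [hL, hR, Finsupp.sum, haugF_sum, haugF_sum]
    refine Finset.sum_congr rfl fun w _ => ?_
    rw [haugF_smul, haugF_smul, map_intCast]
    norm_cast
  -- write `A` with integer coefficients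
  obtain ⟨n, hn⟩ := hA
  let N : Wa →₀ R := n.mapRange (fun m : ℤ => ((m : R))) (by simp)
  have hAN : A = S N := by
    have h1 : S N = n.sum fun w m => mulOp (((m : R)) : F) * Tw w :=
      Finsupp.sum_mapRange_index (f := fun m : ℤ => ((m : R))) (hf := by simp)
        (g := n) (h := fun w q => mulOp ((q : R) : F) * Tw w)
        (fun w => by simp [mulOp_zero])
    rw [hn, h1, Finsupp.sum]
    exact Finset.sum_congr rfl fun w _ => (mulOp_int (n w) (Tw w)).symm
  -- the two hypotheses give coefficient identities
  have key : ∀ lm : P, φ0 (A * mulOp ((e lm : R) : F)) = A →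
      augF (mulExp (e lm) N) = N := by
    intro lm h
    apply hSinj2
    rw [← hΦ, ← hφS, ← hmulExp, ← hAN, h, hAN]
  have hlam' := key lam hlam
  have hmu' := key mu hmu
  -- conclude
  have hsplit : A * mulOp ((e (lam + mu) : R) : F)
      = S (mulExp (e mu) (mulExp (e lam) N)) := by
    rw [hAN, he lam mu]
    have : (((e lam * e mu : R)) : F) = ((e lam : R) : F) * ((e mu : R) : F) := by
      push_cast; ring
    rw [this, mulOp_mul, ← mul_assoc, hmulExp, hmulExp]
  rw [hsplit, hφS, hΦ, haugF_mulExp, hlam', hmu', ← hAN]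

end
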